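/- Let R be a commutative ring, G a finite cyclic group generated by γ, and M an R[G]-module that is free of rank n as an R-module. If M_γ ∈ Mₙ(R) is the matrix of the action of γ on an R-basis of M, then the zeroth Fitting ideal of M over R[G] is the principal ideal generated by det(γ·Iₙ − M_γ), i.e. the characteristic polynomial det(X·Iₙ − M_γ) evaluated at X = γ in R[G]. -/

import Mathlib

lemma aux_adjoin {R G : Type*} [CommRing R] [CommGroup G] [Finite G] (γ : G)
    (hγ : Subgroup.zpowers γ = ⊤) :
    Algebra.adjoin R ({MonoidAlgebra.of R G γ} : Set (MonoidAlgebra R G)) = ⊤ := by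
  rw [eq_top_iff]
  intro s _
  refine MonoidAlgebra.induction_on s ?_ ?_ ?_
  · intro a
    obtain ⟨m, hm⟩ : a ∈ Submonoid.powers γ := by
      rw [mem_powers_iff_mem_zpowers, hγ]; trivial
    rw [← hm, map_pow]
    exact pow_mem (Algebra.subset_adjoin (Set.mem_singleton _)) m
  · intro f g hf hg; exact add_mem hf hg
  · intro r f hf; exact Subalgebra.smul_mem _ hf r


open Finset in
/-- The zeroth Fitting ideal of a module: the ideal generated, over all finite generating
families `v` and all square matrices `A` whose rows are relations among the `v j`, by the
determinants `det A`. -/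
noncomputable def fittingIdeal (R M : Type*) [CommRing R] [AddCommGroup M] [Module R M] :
    Ideal R :=
  ⨆ (n : ℕ) (v : Fin n → M) (_ : Submodule.span R (Set.range v) = ⊤),
    Ideal.span {r : R | ∃ A : Matrix (Fin n) (Fin n) R,
      r = A.det ∧ ∀ i, ∑ j, A i j • v j = 0}

open Finset in
/-- (Greither–Popescu) Let `G` be a finite cyclic group generated by `γ`, `R` a commutative
ring, and `M` an `R[G]`-module that is free of rank `n` over `R`, with `Mγ` the matrix of the
action of `γ` on an `R`-basis of `M`. Then the zeroth Fitting ideal of `M` over `R[G]` is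
generated by the characteristic polynomial of `Mγ` evaluated at `X = γ`. -/
theorem fittingIdeal_eq_charpoly_eval_generator {R G M : Type*} [CommRing R] [CommGroup G]
    [Finite G] (γ : G) (hγ : Subgroup.zpowers γ = ⊤)
    [AddCommGroup M] [Module (MonoidAlgebra R G) M] [Module R M]
    [IsScalarTower R (MonoidAlgebra R G) M]
    {n : ℕ} (b : Module.Basis (Fin n) R M) (Mγ : Matrix (Fin n) (Fin n) R)
    (hMγ : ∀ i, (MonoidAlgebra.of R G γ) • b i = ∑ j, Mγ i j • b j) :
    fittingIdeal (MonoidAlgebra R G) M =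
      Ideal.span {Polynomial.aeval (MonoidAlgebra.of R G γ : MonoidAlgebra R G) Mγ.charpoly} := by

  set S := MonoidAlgebra R G with hS
  set g : S := MonoidAlgebra.of R G γ with hg
  set Bm : Matrix (Fin n) (Fin n) S := g • (1 : Matrix (Fin n) (Fin n) S) - Mγ.map (algebraMap R S) with hBm
  have hBm_apply : ∀ i l, Bm i l = (if i = l then g else 0) - algebraMap R S (Mγ i l) := by
    intro i l
    simp [hBm, Matrix.sub_apply, Matrix.smul_apply, Matrix.one_apply, Matrix.map_apply,
      smul_eq_mul, mul_ite, mul_one, mul_zero]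
  have hδ : Polynomial.aeval g Mγ.charpoly = Bm.det := by
    rw [Matrix.charpoly, AlgHom.map_det]
    congr 1
    ext i l
    by_cases h : i = l <;>
      simp [h, Matrix.charmatrix_apply, Matrix.diagonal_apply, hBm_apply, Polynomial.aeval_X,
        Polynomial.aeval_C, AlgHom.mapMatrix_apply, Matrix.map_apply]
  have hrowB : ∀ i, ∑ l, Bm i l • b l = 0 := by
    intro i
    have : ∀ l, Bm i l • b l = (if i = l then g • b l else 0) - Mγ i l • b l := by
      intro l
      rw [hBm_apply, sub_smul, ite_smul, zero_smul, algebraMap_smul]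
    rw [Finset.sum_congr rfl fun l _ => this l, Finset.sum_sub_distrib,
      Finset.sum_ite_eq _ i (fun l => g • b l), if_pos (Finset.mem_univ i), hMγ i, sub_self]
  have hKsum : ∀ y ∈ Submodule.span S (Set.range fun i => (Bm i : Fin n → S)),
      ∑ i, y i • b i = 0 := by
    intro y hy
    refine Submodule.span_induction ?_ ?_ ?_ ?_ hy
    · rintro y ⟨i, rfl⟩; exact hrowB i
    · simp
    · intro y z _ _ hy hz
      simp only [Pi.add_apply, add_smul, Finset.sum_add_distrib, hy, hz, add_zero]
    · intro s y _ hy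
      have h1 : ∀ i, (s • y) i • b i = s • (y i • b i) := by
        intro i; simp [Pi.smul_apply, smul_eq_mul, mul_smul]
      rw [Finset.sum_congr rfl fun i _ => h1 i, ← Finset.smul_sum, hy, smul_zero]
  have hadj := aux_adjoin (R := R) γ hγ
  have hker : ∀ x : Fin n → S, ∑ i, x i • b i = 0 →
      x ∈ Submodule.span S (Set.range fun i => (Bm i : Fin n → S)) := by
    set K := Submodule.span S (Set.range fun i => (Bm i : Fin n → S)) with hK
    set L := Submodule.span R (Set.range fun i => (Pi.single i (1:S) : Fin n → S)) with hL
    set N := K.restrictScalars R ⊔ L with hN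
    have hsingle : ∀ i, (Pi.single i (1:S) : Fin n → S) ∈ N :=
      fun i => Submodule.mem_sup_right (Submodule.subset_span ⟨i, rfl⟩)
    have hNsmul : ∀ s : S, ∀ i, s • (Pi.single i (1:S) : Fin n → S) ∈ N := by
      intro s
      have hs : s ∈ Algebra.adjoin R ({g} : Set S) := hadj ▸ Algebra.mem_top
      refine Algebra.adjoin_induction ?_ ?_ ?_ ?_ hs
      · intro x hx i
        have hxg : x = g := hx
        subst hxg
        have key : g • (Pi.single i (1:S) : Fin n → S)
            = Bm i + ∑ l, Mγ i l • (Pi.single l (1:S) : Fin n → S) := by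
          funext l
          simp only [Pi.smul_apply, Pi.add_apply, hBm_apply, Finset.sum_apply,
            Pi.single_apply, smul_eq_mul, Pi.smul_apply]
          rw [Finset.sum_congr rfl (fun l' _ => by rw [smul_ite, smul_zero]),
            Finset.sum_ite_eq _ l (fun l' => Mγ i l' • (1:S))]
          simp only [Finset.mem_univ, if_true]
          rw [Algebra.smul_def, mul_one, mul_ite, mul_one, mul_zero]
          by_cases h : i = l <;> simp [h, eq_comm]
        rw [key]
        refine add_mem (Submodule.mem_sup_left (Submodule.subset_span ⟨i, rfl⟩)) ?_
        exact Submodule.sum_mem _ fun l _ => Submodule.smul_mem N (Mγ i l) (hsingle l)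
      · intro r i
        rw [algebraMap_smul]
        exact Submodule.smul_mem N r (hsingle i)
      · intro x y _ _ hx hy i
        rw [add_smul]
        exact add_mem (hx i) (hy i)
      · intro x y _ _ hx hy i
        rw [mul_smul]
        obtain ⟨k, hk, z, hz, hkz⟩ := Submodule.mem_sup.mp (hy i)
        obtain ⟨c, hc⟩ := (Submodule.mem_span_range_iff_exists_fun R).mp hz
        rw [← hkz, ← hc, smul_add, Finset.smul_sum]
        refine add_mem (Submodule.mem_sup_left ?_) (Submodule.sum_mem _ fun l _ => ?_)
        · exact Submodule.smul_mem K x hk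
        · rw [smul_comm]
          exact Submodule.smul_mem N (c l) (hx l)
    intro x hx
    have hxN : x ∈ N := by
      have hxe : x = ∑ i, x i • (Pi.single i (1:S) : Fin n → S) := by
        funext l
        simp [Pi.single_apply, Finset.sum_apply, smul_eq_mul, mul_ite, mul_one, mul_zero]
      rw [hxe]
      exact Submodule.sum_mem _ fun i _ => hNsmul (x i) i
    obtain ⟨k, hk, z, hz, hkz⟩ := Submodule.mem_sup.mp hxN
    obtain ⟨c, hc⟩ := (Submodule.mem_span_range_iff_exists_fun R).mp hz
    have hzv : ∀ i, z i = algebraMap R S (c i) := by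
      intro i
      rw [← hc]
      simp [Finset.sum_apply, Pi.single_apply, Algebra.smul_def, mul_ite, mul_one, mul_zero]
    have hsum : ∑ i, x i • b i = ∑ i, k i • b i + ∑ i, c i • b i := by
      rw [← hkz]
      rw [← Finset.sum_add_distrib]
      refine Finset.sum_congr rfl fun i _ => ?_
      rw [Pi.add_apply, add_smul, hzv i, algebraMap_smul]
    rw [hx] at hsum
    rw [hKsum k hk] at hsum
    have hc0 : ∀ i, c i = 0 := by
      have := Fintype.linearIndependent_iff.mp b.linearIndependent c
      apply this
      simpa using hsum.symm
    have hz0 : z = 0 := by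
      funext i; simp [hzv i, hc0 i]
    rw [← hkz, hz0, add_zero]
    exact hk

  have honesum : ∀ {m' : ℕ} (w : Fin m' → M) (k : Fin m'),
      ∑ k', (1 : Matrix (Fin m') (Fin m') S) k k' • w k' = w k := by
    intro m' w k
    rw [Finset.sum_congr rfl (fun k' _ => by
      rw [Matrix.one_apply, ite_smul, zero_smul, one_smul]),
      Finset.sum_ite_eq _ k w, if_pos (Finset.mem_univ k)]
  have hfit : fittingIdeal S M = ⨆ (N : ℕ) (v : Fin N → M)
      (_ : Submodule.span S (Set.range v) = ⊤),
      Ideal.span {r : S | ∃ A : Matrix (Fin N) (Fin N) S,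
        r = A.det ∧ ∀ i, ∑ j, A i j • v j = 0} := rfl
  rw [hfit]
  apply le_antisymm
  · refine iSup_le fun m => iSup_le fun v => iSup_le fun hv => ?_
    rw [Ideal.span_le]
    rintro r ⟨A, rfl, hA⟩
    rw [SetLike.mem_coe, hδ, Ideal.mem_span_singleton]
    have hbv : ∀ j, ∃ c : Fin m → S, ∑ k, c k • v k = b j := fun j =>
      (Submodule.mem_span_range_iff_exists_fun S).mp (by rw [hv]; trivial)
    choose c hc using hbv
    set D : Fin m → Fin n → S := fun k j => algebraMap R S (b.repr (v k) j) with hD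
    have hDv : ∀ k, ∑ j, D k j • b j = v k := by
      intro k
      simp only [hD, algebraMap_smul]
      exact b.sum_repr (v k)
    set T : Matrix (Fin m ⊕ Fin n) (Fin m ⊕ Fin n) S :=
      Matrix.fromBlocks 1 (Matrix.of fun k j => -(D k j)) 0 Bm with hT
    set u : Fin m ⊕ Fin n → M := Sum.elim v b with hu
    have hTrow : ∀ p, ∑ q, T p q • u q = 0 := by
      intro p
      rw [Fintype.sum_sum_type]
      cases p with
      | inl k =>
        simp only [hT, Matrix.fromBlocks_apply₁₁, Matrix.fromBlocks_apply₁₂, hu,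
          Sum.elim_inl, Sum.elim_inr, Matrix.of_apply]
        rw [honesum v k]
        rw [Finset.sum_congr rfl (fun j _ => by rw [neg_smul]), Finset.sum_neg_distrib,
          hDv k, add_neg_cancel]
      | inr j =>
        simp only [hT, Matrix.fromBlocks_apply₂₁, Matrix.fromBlocks_apply₂₂, hu,
          Sum.elim_inl, Sum.elim_inr, Matrix.zero_apply, zero_smul,
          Finset.sum_const_zero, zero_add]
        exact hrowB j
    have hker' : ∀ y : Fin m ⊕ Fin n → S, (∑ q, y q • u q = 0) →
        y ∈ Submodule.span S (Set.range fun p => (T p : Fin m ⊕ Fin n → S)) := by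
      intro y hy
      set y' : Fin m ⊕ Fin n → S := y - ∑ k, y (Sum.inl k) • T (Sum.inl k) with hy'
      have hy'inl : ∀ k', y' (Sum.inl k') = 0 := by
        intro k'
        simp only [hy', Pi.sub_apply, Finset.sum_apply, Pi.smul_apply, smul_eq_mul, hT,
          Matrix.fromBlocks_apply₁₁]
        rw [Finset.sum_congr rfl (fun k _ => by
          rw [Matrix.one_apply, mul_ite, mul_one, mul_zero]),
          Finset.sum_ite_eq' _ k' (fun k => y (Sum.inl k)), if_pos (Finset.mem_univ k'),
          sub_self]
      have hy'rel : ∑ q, y' q • u q = 0 := by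
        have expand : ∀ q, y' q = y q - ∑ k, y (Sum.inl k) * T (Sum.inl k) q := by
          intro q
          simp [hy', Finset.sum_apply, smul_eq_mul]
        rw [Finset.sum_congr rfl fun q _ => by rw [expand q, sub_smul, Finset.sum_smul]]
        rw [Finset.sum_sub_distrib, hy, zero_sub, neg_eq_zero]
        calc ∑ q, ∑ k, (y (Sum.inl k) * T (Sum.inl k) q) • u q
            = ∑ k, ∑ q, (y (Sum.inl k) * T (Sum.inl k) q) • u q := Finset.sum_comm
          _ = ∑ k, y (Sum.inl k) • ∑ q, T (Sum.inl k) q • u q := by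
              refine Finset.sum_congr rfl fun k _ => ?_
              rw [Finset.smul_sum]
              exact Finset.sum_congr rfl fun q _ => (mul_smul _ _ _)
          _ = 0 := by simp [hTrow]
      have hz : (fun l => y' (Sum.inr l)) ∈
          Submodule.span S (Set.range fun i => (Bm i : Fin n → S)) := by
        apply hker
        have h2 := hy'rel
        rw [Fintype.sum_sum_type] at h2
        simpa [hy'inl, hu] using h2
      let ext0 : (Fin n → S) →ₗ[S] (Fin m ⊕ Fin n → S) :=
        { toFun := fun z => Sum.elim 0 z
          map_add' := by intro a b; funext q; cases q <;> simp
          map_smul' := by intro s a; funext q; cases q <;> simp }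
      have hy'eq : y' = ext0 (fun l => y' (Sum.inr l)) := by
        funext q
        cases q with
        | inl k => simp [ext0, hy'inl]
        | inr l => simp [ext0]
      have himg : ⇑ext0 '' (Set.range fun i => (Bm i : Fin n → S)) ⊆
          Set.range fun p => (T p : Fin m ⊕ Fin n → S) := by
        rintro _ ⟨_, ⟨j, rfl⟩, rfl⟩
        refine ⟨Sum.inr j, ?_⟩
        funext q
        cases q with
        | inl k => simp [ext0, hT]
        | inr l => simp [ext0, hT]
      have hy'mem : y' ∈ Submodule.span S (Set.range fun p => (T p : Fin m ⊕ Fin n → S)) := by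
        rw [hy'eq]
        refine Submodule.span_mono himg ?_
        rw [← Submodule.map_span]
        exact Submodule.mem_map_of_mem hz
      have hysplit : y = y' + ∑ k, y (Sum.inl k) • T (Sum.inl k) := by
        simp [hy']
      rw [hysplit]
      exact add_mem hy'mem (Submodule.sum_mem _ fun k _ =>
        Submodule.smul_mem _ _ (Submodule.subset_span ⟨Sum.inl k, rfl⟩))
    set At : Matrix (Fin m ⊕ Fin n) (Fin m ⊕ Fin n) S :=
      Matrix.fromBlocks A 0 (Matrix.of fun j k => -(c j k)) 1 with hAt
    have hAtrow : ∀ p, ∑ q, At p q • u q = 0 := by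
      intro p
      rw [Fintype.sum_sum_type]
      cases p with
      | inl i =>
        simp only [hAt, Matrix.fromBlocks_apply₁₁, Matrix.fromBlocks_apply₁₂, hu,
          Sum.elim_inl, Sum.elim_inr, Matrix.zero_apply, zero_smul,
          Finset.sum_const_zero, add_zero]
        exact hA i
      | inr j =>
        simp only [hAt, Matrix.fromBlocks_apply₂₁, Matrix.fromBlocks_apply₂₂, hu,
          Sum.elim_inl, Sum.elim_inr, Matrix.of_apply]
        rw [honesum b j]
        rw [Finset.sum_congr rfl (fun k _ => by rw [neg_smul]), Finset.sum_neg_distrib,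
          hc j, neg_add_cancel]
    have hrows : ∀ p, ∃ w : Fin m ⊕ Fin n → S, ∑ p', w p' • (T p' : Fin m ⊕ Fin n → S) = At p :=
      fun p => (Submodule.mem_span_range_iff_exists_fun S).mp (hker' (At p) (hAtrow p))
    choose W hW using hrows
    have hAtW : At = Matrix.of W * T := by
      refine Matrix.ext fun p q => ?_
      rw [Matrix.mul_apply]
      have h3 := congrFun (hW p) q
      simpa [Finset.sum_apply, smul_eq_mul] using h3.symm
    have h1 : At.det = A.det := by
      rw [hAt, Matrix.det_fromBlocks_zero₁₂, Matrix.det_one, mul_one]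
    have h2 : T.det = Bm.det := by
      rw [hT, Matrix.det_fromBlocks_zero₂₁, Matrix.det_one, one_mul]
    refine ⟨(Matrix.of W).det, ?_⟩
    rw [← h1, hAtW, Matrix.det_mul, h2, mul_comm]
  · rw [Ideal.span_le, Set.singleton_subset_iff, SetLike.mem_coe, hδ]
    have hbtop : Submodule.span S (Set.range (b : Fin n → M)) = ⊤ := by
      rw [eq_top_iff]
      intro x _
      exact Submodule.span_le_restrictScalars R S (Set.range (b : Fin n → M))
        (by rw [b.span_eq]; trivial)
    have hmem : Bm.det ∈ Ideal.span {r : S | ∃ A : Matrix (Fin n) (Fin n) S,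
        r = A.det ∧ ∀ i, ∑ j, A i j • b j = 0} :=
      Ideal.subset_span ⟨Bm, rfl, hrowB⟩
    have hle : Ideal.span {r : S | ∃ A : Matrix (Fin n) (Fin n) S,
        r = A.det ∧ ∀ i, ∑ j, A i j • b j = 0} ≤
        ⨆ (N : ℕ) (v : Fin N → M) (_ : Submodule.span S (Set.range v) = ⊤),
        Ideal.span {r : S | ∃ A : Matrix (Fin N) (Fin N) S,
          r = A.det ∧ ∀ i, ∑ j, A i j • v j = 0} :=
      le_iSup_of_le n (le_iSup_of_le (b : Fin n → M) (le_iSup_of_le hbtop le_rfl))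
    exact hle hmem
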